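/- Let (S,d) be complete, f proper lsc with |∂⁻f| a strong upper gradient, and u a p-curve of maximal slope on [0,∞) such that ∫₀^∞ |u'|(r) dr < ∞. Then u extends continuously to [0,∞], i.e. the limit ū := lim_{t→∞} u(t) exists in S; and if moreover liminf_{t→∞} |u'|(t) = 0 and |∂⁻f| is lower semicontinuous, then |∂⁻f|(ū) = 0. -/

import Mathlib

open Filter MeasureTheory Set Topology ENNReal NNReal

noncomputable section

variable {S : Type*} [MetricSpace S]

/-- The metric derivative of a curve `u` at time `t` is `m`. -/
def HasMetricDerivAt (u : ℝ → S) (t m : ℝ) : Prop :=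
  Tendsto (fun s => dist (u s) (u t) / |s - t|) (𝓝[≠] t) (𝓝 m)

/-- `v` is an absolutely continuous curve on `I` with (a.e.) metric derivative `dv`,
integrable on `I`, controlling distances. -/
def IsACCurveOn (v : ℝ → S) (I : Set ℝ) (dv : ℝ → ℝ) : Prop :=
  (∀ t ∈ I, 0 ≤ dv t) ∧ IntegrableOn dv I ∧
  (∀ s ∈ I, ∀ t ∈ I, s ≤ t → dist (v s) (v t) ≤ ∫ r in s..t, dv r) ∧
  (∀ᵐ t ∂(volume.restrict I), HasMetricDerivAt v t (dv t))

/-- The local (descending) slope `|∂⁻ f|`, valued in `ℝ≥0∞`. -/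
def slope' (f : S → EReal) (v : S) : ℝ≥0∞ :=
  if f v = ⊤ then ⊤
  else Filter.limsup (fun w => ENNReal.ofReal ((f v - f w).toReal) / edist v w) (𝓝[≠] v)

/-- `g` is a strong upper gradient for `f`. -/
def StrongUpperGradient (f : S → EReal) (g : S → ℝ≥0∞) : Prop :=
  ∀ (I : Set ℝ) (v : ℝ → S) (dv : ℝ → ℝ), IsACCurveOn v I dv →
    (∀ t ∈ I, f (v t) ≠ ⊤) →
    AEMeasurable (fun t => g (v t)) (volume.restrict I) ∧
    ∀ s ∈ I, ∀ t ∈ I, s ≤ t →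
      ENNReal.ofReal |(f (v t)).toReal - (f (v s)).toReal| ≤
        ∫⁻ r in Set.Ioc s t, g (v r) * ENNReal.ofReal (dv r)

/-- The interval `[0, a)` (with `a ∈ (0, ∞]`) as a subset of `ℝ`. -/
def Icoe (a : ℝ≥0∞) : Set ℝ := {t : ℝ | 0 ≤ t ∧ ENNReal.ofReal t < a}

/-- `u` is a `p`-curve of maximal slope for `f` on `[0,a)` starting from `u₀`,
with metric derivative `du` and non-increasing a.e. representative `φ` of `f ∘ u`. -/
structure IsCMS (f : S → EReal) (p q : ℝ) (a : ℝ≥0∞) (u₀ : S)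
    (u : ℝ → S) (du : ℝ → ℝ) (φ : ℝ → ℝ) : Prop where
  init : u 0 = u₀
  dom : f u₀ ≠ ⊤
  ac : ∀ T : ℝ, Set.Icc 0 T ⊆ Icoe a → IsACCurveOn u (Set.Icc 0 T) du
  anti : AntitoneOn φ (Icoe a)
  eq_ae : ∀ᵐ t ∂(volume.restrict (Icoe a)), (φ t : EReal) = f (u t)
  ineq : ∀ᵐ t ∂(volume.restrict (Icoe a)), ∃ φ' : ℝ,
    HasDerivWithinAt φ φ' (Icoe a) t ∧
    (φ' : EReal) ≤ -(((1/p) * du t ^ p : ℝ) : EReal)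
      - (((1/q : ℝ)) : EReal) * ((slope' f (u t) ^ q : ℝ≥0∞) : EReal)

/-- `f` is `(p, λ)`-convex. -/
def PLConvex (f : S → EReal) (p lam : ℝ) : Prop :=
  ∃ ψ : ℝ → ℝ, (∀ t ∈ Set.Icc (0:ℝ) 1, ψ t ∈ Set.Icc (0:ℝ) 1) ∧
    Tendsto ψ (𝓝[>] (0:ℝ)) (𝓝 0) ∧ (∃ t ∈ Set.Ioo (0:ℝ) 1, ψ t < 1) ∧
    ∀ v₀ v₁ : S, ∃ γ : ℝ → S, ContinuousOn γ (Set.Icc 0 1) ∧ γ 0 = v₀ ∧ γ 1 = v₁ ∧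
      (∀ t ∈ Set.Icc (0:ℝ) 1, dist (γ t) (γ 0) ≤ t * dist (γ 1) (γ 0)) ∧
      (∀ t ∈ Set.Icc (0:ℝ) 1,
        f (γ t) ≤ ((1 - t : ℝ) : EReal) * f (γ 0) + ((t : ℝ) : EReal) * f (γ 1)
          - ((lam * t * (1 - ψ t) * dist (γ 0) (γ 1) ^ p : ℝ) : EReal))

/-- The supremum of times at which the slope along `u` is positive. -/
def tstar (f : S → EReal) (u : ℝ → S) (a : ℝ≥0∞) : ℝ≥0∞ :=
  ⨆ t ∈ {t | t ∈ Icoe a ∧ 0 < slope' f (u t)}, ENNReal.ofReal t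
lemma Icoe_top_eq : Icoe ⊤ = Set.Ici (0:ℝ) := by
  ext t; simp [Icoe]

lemma pick_mem {n : ℕ} {A : Set ℝ} (h : volume (Set.Ioo (n:ℝ) (n+1) \ A) < 1) :
    ∃ t, t ∈ Set.Ioo (n:ℝ) (n+1) ∧ t ∈ A := by
  by_contra hc
  push_neg at hc
  have hsub : Set.Ioo (n:ℝ) (n+1) ⊆ Set.Ioo (n:ℝ) (n+1) \ A := fun x hx => ⟨hx, hc x hx⟩
  have h1 : volume (Set.Ioo (n:ℝ) (n+1)) = 1 := by
    rw [Real.volume_Ioo]; norm_num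
  exact absurd (lt_of_le_of_lt (h1 ▸ measure_mono hsub) h) (lt_irrefl _)

theorem stmt19 [CompleteSpace S] (f : S → EReal) (hproper : ∃ v, f v ≠ ⊤)
    (hbot : ∀ v, f v ≠ ⊥) (hlsc : LowerSemicontinuous f)
    (p q : ℝ) (hp : 1 < p) (hpq : 1 / p + 1 / q = 1)
    (hsug : StrongUpperGradient f (slope' f))
    (u₀ : S) (u : ℝ → S) (du : ℝ → ℝ) (φ : ℝ → ℝ)
    (hu : IsCMS f p q ⊤ u₀ u du φ)
    (hint : (∫⁻ r in Set.Ici (0:ℝ), ENNReal.ofReal (du r)) < ⊤) :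
    ∃ ub : S, Filter.Tendsto u Filter.atTop (𝓝 ub) ∧
      (Filter.liminf (fun t => ENNReal.ofReal (du t)) Filter.atTop = 0 →
        LowerSemicontinuous (slope' f) → slope' f ub = 0) := by
  have hp0 : (0:ℝ) < p := lt_trans one_pos hp
  have hq0 : (0:ℝ) < 1/q := by
    have h1 : 1/q = 1 - 1/p := by linarith
    have h2 : 1/p < 1 := by rw [div_lt_one hp0]; exact hp
    rw [h1]; linarith
  have hqpos : (0:ℝ) < q := one_div_pos.mp hq0
  have hIcoe : Icoe ⊤ = Set.Ici (0:ℝ) := Icoe_top_eq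
  have hac : ∀ T : ℝ, IsACCurveOn u (Set.Icc 0 T) du := fun T =>
    hu.ac T (by rw [hIcoe]; exact fun x hx => hx.1)
  have hdu_nonneg : ∀ t : ℝ, 0 ≤ t → 0 ≤ du t := fun t ht => (hac t).1 t ⟨ht, le_refl t⟩
  have hintg : ∀ T : ℝ, IntegrableOn du (Set.Icc 0 T) := fun T => (hac T).2.1
  have hii : ∀ s t : ℝ, 0 ≤ s → 0 ≤ t → IntervalIntegrable du volume s t := by
    intro s t hs ht
    refine ((hintg (max s t)).mono_set ?_).intervalIntegrable
    rw [Set.uIcc_eq_union]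
    refine Set.union_subset (Set.Icc_subset_Icc hs (le_max_right _ _))
      (Set.Icc_subset_Icc ht (le_max_left _ _))
  set G : ℝ → ℝ := fun t => ∫ r in (0:ℝ)..t, du r with hG
  have hGadd : ∀ s t : ℝ, 0 ≤ s → s ≤ t → G s + ∫ r in s..t, du r = G t := by
    intro s t hs hst
    exact intervalIntegral.integral_add_adjacent_intervals (hii 0 s le_rfl hs)
      (hii s t hs (hs.trans hst))
  have hGd : ∀ s t : ℝ, 0 ≤ s → s ≤ t → dist (u s) (u t) ≤ G t - G s := by
    intro s t hs hst
    have h2 := (hac t).2.2.1 s ⟨hs, hst⟩ t ⟨hs.trans hst, le_rfl⟩ hst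
    have h3 := hGadd s t hs hst
    linarith
  have hGmono : ∀ s t : ℝ, 0 ≤ s → s ≤ t → G s ≤ G t := by
    intro s t hs hst
    have h3 := hGadd s t hs hst
    have h4 : 0 ≤ ∫ r in s..t, du r :=
      intervalIntegral.integral_nonneg hst (fun x hx => hdu_nonneg x (hs.trans hx.1))
    linarith
  have hGnonneg : ∀ t : ℝ, 0 ≤ t → 0 ≤ G t := by
    intro t ht
    have := hGmono 0 t le_rfl ht
    simpa [hG] using this
  set M : ℝ := (∫⁻ r in Set.Ici (0:ℝ), ENNReal.ofReal (du r)).toReal with hM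
  have hGle : ∀ t : ℝ, 0 ≤ t → G t ≤ M := by
    intro t ht
    have e1 : ENNReal.ofReal (G t) = ∫⁻ r in Set.Ioc (0:ℝ) t, ENNReal.ofReal (du r) := by
      rw [hG]
      simp only []
      rw [intervalIntegral.integral_of_le ht]
      refine MeasureTheory.ofReal_integral_eq_lintegral_ofReal
        ((hintg t).mono_set Set.Ioc_subset_Icc_self) ?_
      refine (ae_restrict_iff' measurableSet_Ioc).2 (ae_of_all _ ?_)
      exact fun x hx => hdu_nonneg x (le_of_lt hx.1)
    have e2 : (∫⁻ r in Set.Ioc (0:ℝ) t, ENNReal.ofReal (du r)) ≤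
        ∫⁻ r in Set.Ici (0:ℝ), ENNReal.ofReal (du r) :=
      lintegral_mono_set (fun x hx => le_of_lt hx.1)
    have e3 := ENNReal.toReal_mono hint.ne (e1 ▸ e2)
    rwa [ENNReal.toReal_ofReal (hGnonneg t ht)] at e3
  have hbdd : BddAbove (G '' Set.Ici 0) := ⟨M, by rintro x ⟨t, ht, rfl⟩; exact hGle t ht⟩
  have hne : (G '' Set.Ici 0).Nonempty := ⟨G 0, 0, le_refl (0:ℝ), rfl⟩
  set L : ℝ := sSup (G '' Set.Ici 0) with hL
  have hcauchy : CauchySeq u := by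
    rw [Metric.cauchySeq_iff]
    intro ε hε
    have hlt : L - ε/2 < L := by linarith
    obtain ⟨x, ⟨T, hT, rfl⟩, hx⟩ := exists_lt_of_lt_csSup hne hlt
    refine ⟨T, fun m hm n hn => ?_⟩
    have key : ∀ a b : ℝ, T ≤ a → a ≤ b → dist (u a) (u b) < ε := by
      intro a b ha hab
      have h0a : (0:ℝ) ≤ a := hT.trans ha
      have h1 : dist (u a) (u b) ≤ G b - G a := hGd a b h0a hab
      have h2 : G b ≤ L := le_csSup hbdd ⟨b, h0a.trans hab, rfl⟩
      have h3 : G T ≤ G a := hGmono T a hT ha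
      linarith
    rcases le_total m n with h | h
    · exact key m n hm h
    · rw [dist_comm]; exact key n m hn h
  obtain ⟨ub, hub⟩ := cauchySeq_tendsto_of_complete hcauchy
  refine ⟨ub, hub, ?_⟩
  intro _hliminf hslsc
  have hanti : AntitoneOn φ (Set.Ici 0) := by rw [← hIcoe]; exact hu.anti
  have hineq := hu.ineq
  rw [hIcoe] at hineq
  have heqae := hu.eq_ae
  rw [hIcoe] at heqae
  -- Step B : φ is bounded below on the naturals
  have hZeq : volume ({t | ¬ ((φ t : EReal) = f (u t))} ∩ Set.Ici 0) = 0 := by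
    have h := ae_iff.mp heqae
    rwa [Measure.restrict_apply' measurableSet_Ici] at h
  have hpick1 : ∀ k : ℕ, ∃ t, t ∈ Set.Ioo (k:ℝ) (k+1) ∧ (φ t : EReal) = f (u t) := by
    intro k
    have hsub : Set.Ioo (k:ℝ) (k+1) \ {t | (φ t : EReal) = f (u t)} ⊆
        {t | ¬ ((φ t : EReal) = f (u t))} ∩ Set.Ici 0 := by
      rintro x ⟨hx1, hx2⟩
      exact ⟨hx2, le_of_lt (lt_of_le_of_lt (Nat.cast_nonneg k) hx1.1)⟩
    have hd : volume (Set.Ioo (k:ℝ) (k+1) \ {t | (φ t : EReal) = f (u t)}) < 1 :=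
      lt_of_le_of_lt (le_trans (measure_mono hsub) (le_of_eq hZeq)) zero_lt_one
    exact pick_mem hd
  choose sk hsk1 hsk2 using hpick1
  have hsk_tend : Tendsto (fun k : ℕ => u (sk k)) atTop (𝓝 ub) :=
    hub.comp (tendsto_atTop_mono (fun k => le_of_lt (hsk1 k).1) tendsto_natCast_atTop_atTop)
  obtain ⟨m, _, hm2⟩ := EReal.exists_between_coe_real (bot_lt_iff_ne_bot.mpr (hbot ub))
  have hev : ∀ᶠ k in atTop, m < φ (sk k) := by
    filter_upwards [hsk_tend.eventually (hlsc ub (m : EReal) hm2)] with k hk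
    rw [← hsk2 k] at hk
    exact_mod_cast hk
  obtain ⟨K, hK⟩ := eventually_atTop.mp hev
  have hsknn : ∀ k : ℕ, (0:ℝ) ≤ sk k :=
    fun k => le_of_lt (lt_of_le_of_lt (Nat.cast_nonneg k) (hsk1 k).1)
  have hφlb : ∀ j : ℕ, m ≤ φ (j:ℝ) := by
    intro j
    have hKj : m < φ (sk (max K j)) := hK _ (le_max_left _ _)
    have hjle : (j:ℝ) ≤ sk (max K j) :=
      le_trans (Nat.cast_le.mpr (le_max_right K j)) (le_of_lt (hsk1 _).1)
    exact le_of_lt (lt_of_lt_of_le hKj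
      (hanti (Set.mem_Ici.mpr (Nat.cast_nonneg j)) (Set.mem_Ici.mpr (hsknn _)) hjle))
  set aseq : ℕ → ℝ := fun k => φ (k:ℝ) with ha
  have haanti : Antitone aseq := fun i j hij =>
    hanti (Set.mem_Ici.mpr (Nat.cast_nonneg i)) (Set.mem_Ici.mpr (Nat.cast_nonneg j))
      (Nat.cast_le.mpr hij)
  have habdd : BddBelow (Set.range aseq) := ⟨m, by rintro x ⟨j, rfl⟩; exact hφlb j⟩
  have haconv : Tendsto aseq atTop (𝓝 (⨅ j, aseq j)) := tendsto_atTop_ciInf haanti habdd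
  -- the monotone function g and its Stieltjes measure
  obtain ⟨g, hgdef⟩ : ∃ g : ℝ → ℝ, ∀ t, g t = -φ (max t 0) := ⟨_, fun _ => rfl⟩
  have hgmono : Monotone g := by
    intro s t hst
    rw [hgdef, hgdef]
    exact neg_le_neg (hanti (Set.mem_Ici.mpr (le_max_right s 0))
      (Set.mem_Ici.mpr (le_max_right t 0)) (max_le_max hst le_rfl))
  set ρ : ℝ → ℝ≥0∞ := fun t => hgmono.stieltjesFunction.measure.rnDeriv volume t with hρ
  have hρmeas : Measurable ρ := Measure.measurable_rnDeriv _ _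
  have hE1 : ∀ᵐ t, HasDerivAt g ((ρ t).toReal) t := hgmono.ae_hasDerivAt
  obtain ⟨e, hedef⟩ : ∃ e : ℕ → ℝ, ∀ n, e n = g ((n:ℝ)+2) - g (n:ℝ) := ⟨_, fun _ => rfl⟩
  have he_nonneg : ∀ n, 0 ≤ e n := fun n => by
    rw [hedef]; exact sub_nonneg.mpr (hgmono (by linarith))
  obtain ⟨r, hrdef⟩ : ∃ r : ℕ → ℝ, ∀ n, r n = 2 * e n + 1/((n:ℝ)+1) := ⟨_, fun _ => rfl⟩
  have hr_pos : ∀ n, 0 < r n := by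
    intro n
    have h1 := he_nonneg n
    have h2 : (0:ℝ) < 1/((n:ℝ)+1) := by positivity
    rw [hrdef]
    linarith
  obtain ⟨c, hcdef⟩ : ∃ c : ℕ → ℝ≥0∞, ∀ n, c n = ENNReal.ofReal (r n) := ⟨_, fun _ => rfl⟩
  have hctop : ∀ n, c n ≠ ⊤ := fun n => by rw [hcdef]; exact ENNReal.ofReal_ne_top
  have hμIoo : ∀ n : ℕ, hgmono.stieltjesFunction.measure (Set.Ioo (n:ℝ) (n+1)) ≤
      ENNReal.ofReal (e n) := by
    intro n
    refine le_trans (measure_mono Set.Ioo_subset_Ioc_self) ?_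
    rw [StieltjesFunction.measure_Ioc]
    refine ENNReal.ofReal_le_ofReal ?_
    have h1 : hgmono.stieltjesFunction ((n:ℝ)+1) ≤ g ((n:ℝ)+2) := by
      rw [Monotone.stieltjesFunction_eq]
      exact hgmono.rightLim_le (by linarith)
    have h2 : g (n:ℝ) ≤ hgmono.stieltjesFunction (n:ℝ) := by
      rw [Monotone.stieltjesFunction_eq]
      exact hgmono.le_rightLim le_rfl
    rw [hedef]
    linarith
  have hcheb : ∀ n : ℕ, volume ({x | c n ≤ ρ x} ∩ Set.Ioo (n:ℝ) (n+1)) < 1 := by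
    intro n
    by_contra hcon
    push_neg at hcon
    have h1 : c n * (volume.restrict (Set.Ioo (n:ℝ) (n+1))) {x | c n ≤ ρ x} ≤
        ∫⁻ x, ρ x ∂(volume.restrict (Set.Ioo (n:ℝ) (n+1))) :=
      mul_meas_ge_le_lintegral₀ hρmeas.aemeasurable (c n)
    have h2 : (∫⁻ x in Set.Ioo (n:ℝ) (n+1), ρ x) ≤
        hgmono.stieltjesFunction.measure (Set.Ioo (n:ℝ) (n+1)) :=
      Measure.setLIntegral_rnDeriv_le _
    rw [Measure.restrict_apply' measurableSet_Ioo] at h1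
    have h3 : c n ≤ c n * volume ({x | c n ≤ ρ x} ∩ Set.Ioo (n:ℝ) (n+1)) := by
      calc c n = c n * 1 := (mul_one _).symm
      _ ≤ _ := mul_le_mul_right hcon _
    have h4 : c n ≤ ENNReal.ofReal (e n) := h3.trans (h1.trans (h2.trans (hμIoo n)))
    have h5 : ENNReal.ofReal (e n) < c n := by
      rw [hcdef]
      refine (ENNReal.ofReal_lt_ofReal_iff (hr_pos n)).mpr ?_
      have h6 := he_nonneg n
      have h7 : (0:ℝ) < 1/((n:ℝ)+1) := by positivity
      rw [hrdef]
      linarith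
    exact absurd (h4.trans_lt h5) (lt_irrefl _)
  have hZ2 : volume ({t | ¬ (∃ φ' : ℝ, HasDerivWithinAt φ φ' (Set.Ici 0) t ∧
      (φ' : EReal) ≤ -(((1/p) * du t ^ p : ℝ) : EReal)
        - (((1/q : ℝ)) : EReal) * ((slope' f (u t) ^ q : ℝ≥0∞) : EReal))} ∩ Set.Ici 0) = 0 := by
    have h := ae_iff.mp hineq
    rwa [Measure.restrict_apply' measurableSet_Ici] at h
  have hZ1 : volume {t | ¬ HasDerivAt g ((ρ t).toReal) t} = 0 := ae_iff.mp hE1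
  have hkey : ∀ n : ℕ, ∃ t, t ∈ Set.Ioo (n:ℝ) (n+1) ∧
      (HasDerivAt g ((ρ t).toReal) t ∧
       (∃ φ' : ℝ, HasDerivWithinAt φ φ' (Set.Ici 0) t ∧
        (φ' : EReal) ≤ -(((1/p) * du t ^ p : ℝ) : EReal)
          - (((1/q : ℝ)) : EReal) * ((slope' f (u t) ^ q : ℝ≥0∞) : EReal)) ∧
       ρ t < c n) := by
    intro n
    have hsub : Set.Ioo (n:ℝ) (n+1) \
        {t | HasDerivAt g ((ρ t).toReal) t ∧
          (∃ φ' : ℝ, HasDerivWithinAt φ φ' (Set.Ici 0) t ∧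
            (φ' : EReal) ≤ -(((1/p) * du t ^ p : ℝ) : EReal)
              - (((1/q : ℝ)) : EReal) * ((slope' f (u t) ^ q : ℝ≥0∞) : EReal)) ∧
          ρ t < c n} ⊆
        {t | ¬ HasDerivAt g ((ρ t).toReal) t} ∪
          (({t | ¬ (∃ φ' : ℝ, HasDerivWithinAt φ φ' (Set.Ici 0) t ∧
            (φ' : EReal) ≤ -(((1/p) * du t ^ p : ℝ) : EReal)
              - (((1/q : ℝ)) : EReal) * ((slope' f (u t) ^ q : ℝ≥0∞) : EReal))} ∩ Set.Ici 0) ∪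
           ({x | c n ≤ ρ x} ∩ Set.Ioo (n:ℝ) (n+1))) := by
      rintro x ⟨hx1, hx2⟩
      simp only [Set.mem_setOf_eq] at hx2
      by_cases hA : HasDerivAt g ((ρ x).toReal) x
      · by_cases hB : ∃ φ' : ℝ, HasDerivWithinAt φ φ' (Set.Ici 0) x ∧
            (φ' : EReal) ≤ -(((1/p) * du x ^ p : ℝ) : EReal)
              - (((1/q : ℝ)) : EReal) * ((slope' f (u x) ^ q : ℝ≥0∞) : EReal)
        · right; right
          exact ⟨not_lt.mp (fun hlt => hx2 ⟨hA, hB, hlt⟩), hx1⟩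
        · right; left
          exact ⟨hB, le_of_lt (lt_of_le_of_lt (Nat.cast_nonneg n) hx1.1)⟩
      · left; exact hA
    have hle' : volume (Set.Ioo (n:ℝ) (n+1) \
        {t | HasDerivAt g ((ρ t).toReal) t ∧
          (∃ φ' : ℝ, HasDerivWithinAt φ φ' (Set.Ici 0) t ∧
            (φ' : EReal) ≤ -(((1/p) * du t ^ p : ℝ) : EReal)
              - (((1/q : ℝ)) : EReal) * ((slope' f (u t) ^ q : ℝ≥0∞) : EReal)) ∧
          ρ t < c n}) < 1 := by
      refine lt_of_le_of_lt (measure_mono hsub) ?_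
      refine lt_of_le_of_lt (measure_union_le _ _) ?_
      rw [hZ1, zero_add]
      refine lt_of_le_of_lt (measure_union_le _ _) ?_
      rw [hZ2, zero_add]
      exact hcheb n
    obtain ⟨t, ht1, ht2⟩ := pick_mem hle'
    exact ⟨t, ht1, ht2⟩
  choose tn htn1 htnprop using hkey
  have htnpos : ∀ n : ℕ, (0:ℝ) < tn n := fun n => lt_of_le_of_lt (Nat.cast_nonneg n) (htn1 n).1
  have hslope_le : ∀ n : ℕ, slope' f (u (tn n)) ≤ (ENNReal.ofReal (q * r n)) ^ (1/q) := by
    intro n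
    obtain ⟨htnD, ⟨φ', hdw, hle⟩, htnρ⟩ := htnprop n
    have hnhds : Set.Ici (0:ℝ) ∈ 𝓝 (tn n) := Ici_mem_nhds (htnpos n)
    have hda : HasDerivAt φ φ' (tn n) := hdw.hasDerivAt hnhds
    have hgev : g =ᶠ[𝓝 (tn n)] fun t => -φ t := by
      filter_upwards [Ioi_mem_nhds (htnpos n)] with x hx
      rw [hgdef, max_eq_left (le_of_lt hx)]
    have hneg : HasDerivAt (fun t => -φ t) ((ρ (tn n)).toReal) (tn n) :=
      htnD.congr_of_eventuallyEq hgev.symm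
    have hφd : HasDerivAt φ (-(ρ (tn n)).toReal) (tn n) := by
      have h := hneg.neg
      simpa [Pi.neg_def] using h
    have hφ'eq : φ' = -(ρ (tn n)).toReal := hda.unique hφd
    set A : ℝ≥0∞ := slope' f (u (tn n)) ^ q with hA
    have hAne : A ≠ ⊤ := by
      intro htop
      rw [htop, EReal.coe_ennreal_top, EReal.coe_mul_top_of_pos hq0,
        sub_eq_add_neg, EReal.neg_top, EReal.add_bot] at hle
      exact EReal.coe_ne_bot φ' (le_bot_iff.mp hle)
    have hAcoe : ((A : ℝ≥0∞) : EReal) = ((A.toReal : ℝ) : EReal) := by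
      have h1 : (A : EReal) ≠ ⊤ := by
        simp only [ne_eq, EReal.coe_ennreal_eq_top_iff]
        exact hAne
      have h2 := EReal.coe_toReal h1 (EReal.coe_ennreal_ne_bot A)
      rw [EReal.toReal_coe_ennreal] at h2
      exact h2.symm
    rw [hAcoe] at hle
    have hle' : φ' ≤ -((1/p) * du (tn n) ^ p) - (1/q) * A.toReal := by
      exact_mod_cast hle
    have hDle : (ρ (tn n)).toReal ≤ r n := by
      have h := ENNReal.toReal_mono (hctop n) (le_of_lt htnρ)
      rwa [hcdef, ENNReal.toReal_ofReal (le_of_lt (hr_pos n))] at h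
    have hdu0 : 0 ≤ du (tn n) := hdu_nonneg _ (le_of_lt (htnpos n))
    have hx0 : 0 ≤ (1/p) * du (tn n) ^ p :=
      mul_nonneg (by positivity) (Real.rpow_nonneg hdu0 p)
    have hφ'val : -(ρ (tn n)).toReal ≤ -((1/p) * du (tn n) ^ p) - (1/q) * A.toReal := by
      rw [← hφ'eq]; exact hle'
    have hAtr : A.toReal ≤ q * r n := by
      have h1 : (1/q) * A.toReal ≤ r n := by linarith
      have h2 : q * ((1/q) * A.toReal) ≤ q * r n := mul_le_mul_of_nonneg_left h1 (le_of_lt hqpos)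
      have h3 : q * ((1/q) * A.toReal) = A.toReal := by field_simp
      linarith
    have hAle : A ≤ ENNReal.ofReal (q * r n) := by
      rw [← ENNReal.ofReal_toReal hAne]
      exact ENNReal.ofReal_le_ofReal hAtr
    have hsA : slope' f (u (tn n)) = A ^ (1/q) := by
      rw [hA, ← ENNReal.rpow_mul, mul_one_div_cancel hqpos.ne', ENNReal.rpow_one]
    rw [hsA]
    exact ENNReal.rpow_le_rpow hAle (le_of_lt hq0)
  have he_tend : Tendsto e atTop (𝓝 0) := by
    have hgn : ∀ n : ℕ, g (n:ℝ) = -aseq n := by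
      intro n
      rw [hgdef, max_eq_left (Nat.cast_nonneg n : (0:ℝ) ≤ n)]
    have hgn2 : ∀ n : ℕ, g ((n:ℝ)+2) = -aseq (n+2) := by
      intro n
      have h1 : ((n:ℝ)+2) = ((n+2 : ℕ) : ℝ) := by push_cast; ring
      rw [h1]; exact hgn (n+2)
    have h2 : Tendsto (fun n => aseq (n+2)) atTop (𝓝 (⨅ j, aseq j)) :=
      haconv.comp (tendsto_add_atTop_nat 2)
    have h3 : Tendsto (fun n => aseq n - aseq (n+2)) atTop (𝓝 0) := by
      have h := haconv.sub h2
      simpa using h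
    refine h3.congr ?_
    intro n
    rw [hedef, hgn, hgn2]; ring
  have hr_tend : Tendsto r atTop (𝓝 0) := by
    have h1 : Tendsto (fun n : ℕ => 1/((n:ℝ)+1)) atTop (𝓝 0) :=
      tendsto_one_div_add_atTop_nhds_zero_nat
    have h2 : Tendsto (fun n : ℕ => 2 * e n + 1/((n:ℝ)+1)) atTop (𝓝 0) := by
      have h3 := (he_tend.const_mul 2).add h1
      simpa using h3
    exact h2.congr (fun n => (hrdef n).symm)
  have hslope_tend : Tendsto (fun n => slope' f (u (tn n))) atTop (𝓝 0) := by
    rw [ENNReal.tendsto_nhds_zero]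
    intro ε hε
    rcases eq_or_ne ε ⊤ with htop | htop
    · exact Eventually.of_forall (fun n => htop ▸ le_top)
    · have hεq : (0:ℝ≥0∞) < ε ^ q := ENNReal.rpow_pos hε htop
      have h2 : Tendsto (fun n => ENNReal.ofReal (q * r n)) atTop (𝓝 0) := by
        have h3 : Tendsto (fun n => q * r n) atTop (𝓝 0) := by
          simpa using hr_tend.const_mul q
        have h4 := ENNReal.tendsto_ofReal h3
        simpa using h4
      have h4 : ∀ᶠ n in atTop, ENNReal.ofReal (q * r n) < ε ^ q :=
        h2.eventually_lt_const hεq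
      filter_upwards [h4] with n hn
      have h5 := (hslope_le n).trans (ENNReal.rpow_le_rpow (le_of_lt hn) (le_of_lt hq0))
      rwa [← ENNReal.rpow_mul, mul_one_div_cancel hqpos.ne', ENNReal.rpow_one] at h5
  by_contra h0
  obtain ⟨y, hy0, hylt⟩ := exists_between (pos_iff_ne_zero.mpr h0)
  have htn_tend : Tendsto (fun n : ℕ => tn n) atTop atTop :=
    tendsto_atTop_mono (fun n => le_of_lt (htn1 n).1) tendsto_natCast_atTop_atTop
  have hu_tn : Tendsto (fun n => u (tn n)) atTop (𝓝 ub) := hub.comp htn_tend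
  have h1 : ∀ᶠ n in atTop, y < slope' f (u (tn n)) := hu_tn.eventually (hslsc ub y hylt)
  have h2 : ∀ᶠ n in atTop, slope' f (u (tn n)) < y := hslope_tend.eventually_lt_const hy0
  obtain ⟨n, hn1, hn2⟩ := (h1.and h2).exists
  exact absurd (hn1.trans hn2) (lt_irrefl _)
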